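/- For parameters A, B, C > 0 with B > A (i.e., B/A > 1), the Jacobian of F at S₂ = (1, 1+C, 0) has the real eigenvalue A − B, which is strictly negative, while at S₃ = (√(B/A), 0, (1+C√(B/A))/√(AB)) the Jacobian has the real eigenvalue √(B/A) − 1, which is strictly positive. -/

import Mathlib

/-- The vector field of the system
`dX/dt = X − XY + CX² − AZX²`, `dY/dt = −Y + XY`, `dZ/dt = −BZ + AZX²`. -/
def lvField (A B C : ℝ) (p : ℝ × ℝ × ℝ) : ℝ × ℝ × ℝ :=
  (p.1 - p.1 * p.2.1 + C * p.1 ^ 2 - A * p.2.2 * p.1 ^ 2,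
   -p.2.1 + p.1 * p.2.1,
   -B * p.2.2 + A * p.2.2 * p.1 ^ 2)

noncomputable def lvRow (a b c : ℝ) : ℝ × ℝ × ℝ →L[ℝ] ℝ :=
  a • (ContinuousLinearMap.fst ℝ ℝ (ℝ × ℝ)) +
  b • ((ContinuousLinearMap.fst ℝ ℝ ℝ).comp (ContinuousLinearMap.snd ℝ ℝ (ℝ × ℝ))) +
  c • ((ContinuousLinearMap.snd ℝ ℝ ℝ).comp (ContinuousLinearMap.snd ℝ ℝ (ℝ × ℝ)))

@[simp] lemma lvRow_apply (a b c : ℝ) (v : ℝ × ℝ × ℝ) :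
    lvRow a b c v = a * v.1 + b * v.2.1 + c * v.2.2 := by
  simp [lvRow]

noncomputable def lvJac (A B C : ℝ) (p : ℝ × ℝ × ℝ) : ℝ × ℝ × ℝ →L[ℝ] ℝ × ℝ × ℝ :=
  (lvRow (1 - p.2.1 + 2 * C * p.1 - 2 * A * p.2.2 * p.1) (-p.1) (-(A * p.1 ^ 2))).prod
    ((lvRow p.2.1 (-1 + p.1) 0).prod
      (lvRow (2 * A * p.2.2 * p.1) 0 (-B + A * p.1 ^ 2)))

lemma lv_hasFDerivAt (A B C : ℝ) (p : ℝ × ℝ × ℝ) :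
    HasFDerivAt (lvField A B C) (lvJac A B C p) p := by
  have hx : HasFDerivAt (fun q : ℝ × ℝ × ℝ => q.1)
      (ContinuousLinearMap.fst ℝ ℝ (ℝ × ℝ)) p := hasFDerivAt_fst
  have hy : HasFDerivAt (fun q : ℝ × ℝ × ℝ => q.2.1)
      ((ContinuousLinearMap.fst ℝ ℝ ℝ).comp (ContinuousLinearMap.snd ℝ ℝ (ℝ × ℝ))) p :=
    hasFDerivAt_fst.comp p hasFDerivAt_snd
  have hz : HasFDerivAt (fun q : ℝ × ℝ × ℝ => q.2.2)
      ((ContinuousLinearMap.snd ℝ ℝ ℝ).comp (ContinuousLinearMap.snd ℝ ℝ (ℝ × ℝ))) p :=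
    hasFDerivAt_snd.comp p hasFDerivAt_snd
  have h1 := ((hx.sub (hx.mul hy)).add ((hx.mul hx).const_mul C)).sub
      ((hz.const_mul A).mul (hx.mul hx))
  have h2 := (hy.neg).add (hx.mul hy)
  have h3 := ((hz.const_mul B).neg).add ((hz.const_mul A).mul (hx.mul hx))
  have h := h1.prodMk (h2.prodMk h3)
  have hfun : lvField A B C = (fun q : ℝ × ℝ × ℝ =>
      (q.1 - q.1 * q.2.1 + C * (q.1 * q.1) - A * q.2.2 * (q.1 * q.1),
       -q.2.1 + q.1 * q.2.1,
       -(B * q.2.2) + A * q.2.2 * (q.1 * q.1))) := by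
    funext q; simp only [lvField, Prod.mk.injEq]; exact ⟨by ring, trivial, by ring⟩
  rw [hfun]
  refine h.congr_fderiv ?_
  refine ContinuousLinearMap.ext fun v => ?_
  simp [lvJac, Prod.ext_iff]
  constructor
  · ring
  constructor
  · ring
  · ring

/-- For `A, B, C > 0` with `B > A`, the Jacobian at `S₂ = (1, 1+C, 0)` has the real
eigenvalue `A − B`, which is strictly negative, while the Jacobian at
`S₃ = (√(B/A), 0, (1 + C√(B/A))/√(AB))` has the real eigenvalue `√(B/A) − 1`, which is
strictly positive. -/
theorem jacobian_real_eigenvalues (A B C : ℝ) (hA : 0 < A) (hB : 0 < B) (hC : 0 < C)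
    (hBA : A < B) :
    Module.End.HasEigenvalue
      ((fderiv ℝ (lvField A B C) (1, 1 + C, 0) :
        ℝ × ℝ × ℝ →ₗ[ℝ] ℝ × ℝ × ℝ) : Module.End ℝ (ℝ × ℝ × ℝ)) (A - B) ∧
    A - B < 0 ∧
    Module.End.HasEigenvalue
      ((fderiv ℝ (lvField A B C)
          (Real.sqrt (B / A), 0, (1 + C * Real.sqrt (B / A)) / Real.sqrt (A * B)) :
        ℝ × ℝ × ℝ →ₗ[ℝ] ℝ × ℝ × ℝ) : Module.End ℝ (ℝ × ℝ × ℝ)) (Real.sqrt (B / A) - 1) ∧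
    0 < Real.sqrt (B / A) - 1 := by
  have hAB : A - B < 0 := by linarith
  -- square roots
  set a := Real.sqrt A with ha_def
  set b := Real.sqrt B with hb_def
  have ha : 0 < a := Real.sqrt_pos.mpr hA
  have hb : 0 < b := Real.sqrt_pos.mpr hB
  have ha2 : a ^ 2 = A := Real.sq_sqrt hA.le
  have hb2 : b ^ 2 = B := Real.sq_sqrt hB.le
  have hs : Real.sqrt (B / A) = b / a := Real.sqrt_div hB.le A
  have hab : Real.sqrt (A * B) = a * b := Real.sqrt_mul hA.le B
  have hs1 : 1 < b / a := by
    rw [lt_div_iff₀ ha, one_mul]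
    have := Real.sqrt_lt_sqrt hA.le hBA
    simpa using this
  have hspos : 0 < Real.sqrt (B / A) - 1 := by rw [hs]; linarith
  refine ⟨?_, hAB, ?_, hspos⟩
  · -- at S₂
    set lam := A - B with hlam
    set d := C * lam - lam ^ 2 - 1 - C with hd
    have hdne : d ≠ 0 := by nlinarith
    have hfd := (lv_hasFDerivAt A B C (1, 1 + C, 0)).fderiv
    refine Module.End.hasEigenvalue_of_hasEigenvector
      (x := (A * lam, (1 + C) * A, d)) ⟨?_, ?_⟩
    · rw [Module.End.mem_eigenspace_iff]
      simp only [ContinuousLinearMap.coe_coe, hfd, lvJac, ContinuousLinearMap.prod_apply,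
        lvRow_apply, Prod.smul_mk, smul_eq_mul, Prod.mk.injEq]
      refine ⟨by rw [hd]; ring, by ring, by rw [hlam]; ring⟩
    · intro h
      apply hdne
      simpa using congrArg (fun v : ℝ × ℝ × ℝ => v.2.2) h
  · -- at S₃
    set s := b / a with hs_def
    set lam := s - 1 with hlam
    set m := 2 * (1 + C * s) with hm
    have hspos' : 0 < s := by positivity
    have hmpos : 0 < m := by
      have : 0 < C * s := mul_pos hC hspos'
      rw [hm]; linarith
    have hfd := (lv_hasFDerivAt A B C
      (Real.sqrt (B / A), 0, (1 + C * Real.sqrt (B / A)) / Real.sqrt (A * B))).fderiv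
    rw [hs, hab] at hfd ⊢
    refine Module.End.hasEigenvalue_of_hasEigenvector
      (x := (lam * s, -(lam + lam ^ 2 + B * m), m * s)) ⟨?_, ?_⟩
    · rw [Module.End.mem_eigenspace_iff]
      simp only [ContinuousLinearMap.coe_coe, hfd, lvJac, ContinuousLinearMap.prod_apply,
        lvRow_apply, Prod.smul_mk, smul_eq_mul, Prod.mk.injEq]
      rw [hlam, hm, hs_def, ← ha2, ← hb2]
      refine ⟨?_, by ring, ?_⟩ <;> field_simp <;> ring
    · intro h
      have : m * s = 0 := by simpa using congrArg (fun v : ℝ × ℝ × ℝ => v.2.2) h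
      nlinarith
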